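/- (Equivalence of the minimal time and minimal norm problems.) Assume y₀ ≠ 0 and hypotheses (EC), (BB), (ET). Let M > 0 and T > 0. If u* is an optimal control to (TOCP)_M, then its restriction to (0,T_M) is an optimal control to (NOCP)_{T_M}; and if v* is an optimal control to (NOCP)_T, then its extension by zero outside (0,T) is an optimal control to (TOCP)_{M_T}. -/

import Mathlib

open MeasureTheory Set Filter Topology

noncomputable section

variable {H : Type*} [NormedAddCommGroup H] [InnerProductSpace ℂ H] [CompleteSpace H]
  [SecondCountableTopology H]

/-- `U` is a strongly continuous one-parameter group of unitary operators on `H`,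
abstracting the Schrödinger group `e^{-iΔt}`. -/
def IsUnitaryGroup (U : ℝ → H →L[ℂ] H) : Prop :=
  U 0 = ContinuousLinearMap.id ℂ H ∧
  (∀ s t : ℝ, U (s + t) = (U s).comp (U t)) ∧
  (∀ (t : ℝ) (x : H), ‖U t x‖ = ‖x‖) ∧
  ∀ x : H, Continuous fun t : ℝ => U t x

/-- `B` is a nonzero orthogonal projection on `H`, abstracting multiplication by `χ_ω`. -/
def IsOrthProj (B : H →L[ℂ] H) : Prop :=
  B ≠ 0 ∧ B.comp B = B ∧ ∀ x y : H, (inner ℂ (B x) y : ℂ) = inner ℂ x (B y)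

/-- Membership in `L∞((a,b);H)`. -/
def MemLinfty (u : ℝ → H) (a b : ℝ) : Prop :=
  AEStronglyMeasurable u (volume : Measure ℝ) ∧
    ∃ c : ℝ, ∀ᵐ t : ℝ ∂volume, t ∈ Ioo a b → ‖u t‖ ≤ c

/-- Membership in `L∞((0,∞);H)`. -/
def MemLinftyInf (u : ℝ → H) : Prop :=
  AEStronglyMeasurable u (volume : Measure ℝ) ∧
    ∃ c : ℝ, ∀ᵐ t : ℝ ∂volume, t ∈ Ioi (0 : ℝ) → ‖u t‖ ≤ c

/-- The `L∞((a,b);H)` norm of `u`. -/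
def supNorm (u : ℝ → H) (a b : ℝ) : ℝ :=
  sInf {c : ℝ | 0 ≤ c ∧ ∀ᵐ t : ℝ ∂volume, t ∈ Ioo a b → ‖u t‖ ≤ c}

/-- `stateT U B T τ u y₀ = y(T; χ_{(τ,T)}u, y₀)`, the mild solution at time `T` of the
controlled Schrödinger equation with initial state `y₀`, the control acting on `(τ,T)`:
`y(T) = U(T)y₀ + ∫_τ^T U(T-s) B u(s) ds`.  The free state at time `t` starting from `y₀`
with control `u` active from time `0` is `stateT U B t 0 u y₀`. -/
def stateT (U : ℝ → H →L[ℂ] H) (B : H →L[ℂ] H) (T τ : ℝ) (u : ℝ → H) (y₀ : H) : H :=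
  U T y₀ + ∫ s in Ioo τ T, U (T - s) (B (u s))

/-- Hypothesis (EC): `L∞`-exact controllability with cost. -/
def EC (U : ℝ → H →L[ℂ] H) (B : H →L[ℂ] H) : Prop :=
  ∀ τ : ℝ, 0 < τ → ∃ C : ℝ, 0 < C ∧ ∀ y₀ z : H, ∃ u : ℝ → H,
    AEStronglyMeasurable u (volume : Measure ℝ) ∧
    (∀ᵐ t : ℝ ∂volume, t ∈ Ioo 0 τ → ‖u t‖ ≤ C * ‖z - U τ y₀‖) ∧
    stateT U B τ 0 u y₀ = z

/-- Hypothesis (UC): unique continuation. -/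
def UC (U : ℝ → H →L[ℂ] H) (B : H →L[ℂ] H) : Prop :=
  ∀ η : H, η ≠ 0 → volume {t : ℝ | B (U t η) = 0} = 0

/-- The admissible set `U_M` of the minimal time problem `(TOCP)_M`. -/
def UMset (U : ℝ → H →L[ℂ] H) (B : H →L[ℂ] H) (y₀ : H) (M : ℝ) : Set (ℝ → H) :=
  {u | MemLinftyInf u ∧ (∀ᵐ t : ℝ ∂volume, t ∈ Ioi (0 : ℝ) → ‖u t‖ ≤ M) ∧
    ∃ s : ℝ, 0 < s ∧ stateT U B s 0 u y₀ = 0}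

/-- The minimal time `T_M` of `(TOCP)_M`. -/
def Tmin (U : ℝ → H →L[ℂ] H) (B : H →L[ℂ] H) (y₀ : H) (M : ℝ) : ℝ :=
  sInf {s : ℝ | 0 < s ∧ ∃ u ∈ UMset U B y₀ M, stateT U B s 0 u y₀ = 0}

/-- The admissible set `V_T` of the minimal norm problem `(NOCP)_T`. -/
def VTset (U : ℝ → H →L[ℂ] H) (B : H →L[ℂ] H) (y₀ : H) (T : ℝ) : Set (ℝ → H) :=
  {v | MemLinfty v 0 T ∧ stateT U B T 0 v y₀ = 0}

/-- The minimal norm `M_T` of `(NOCP)_T`. -/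
def Mmin (U : ℝ → H →L[ℂ] H) (B : H →L[ℂ] H) (y₀ : H) (T : ℝ) : ℝ :=
  sInf ((fun v : ℝ → H => supNorm v 0 T) '' VTset U B y₀ T)

/-- Hypothesis (BB): bang-bang property of the minimal time problems. -/
def BB (U : ℝ → H →L[ℂ] H) (B : H →L[ℂ] H) : Prop :=
  ∀ y₀ : H, y₀ ≠ 0 → ∀ M : ℝ, 0 < M → ∀ u ∈ UMset U B y₀ M,
    stateT U B (Tmin U B y₀ M) 0 u y₀ = 0 →
    ∀ᵐ t : ℝ ∂volume, t ∈ Ioo 0 (Tmin U B y₀ M) → ‖u t‖ = M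

/-- Hypothesis (ET): existence of optimal controls for the minimal time problems. -/
def ET (U : ℝ → H →L[ℂ] H) (B : H →L[ℂ] H) : Prop :=
  ∀ y₀ : H, y₀ ≠ 0 → ∀ M : ℝ, 0 < M →
    ∃ u ∈ UMset U B y₀ M, stateT U B (Tmin U B y₀ M) 0 u y₀ = 0

/-- The admissible set `U_{M,τ}`. -/
def UadmSet (M τ T : ℝ) : Set (ℝ → H) :=
  {u | MemLinfty u 0 T ∧ ∀ᵐ t : ℝ ∂volume, t ∈ Ioo τ T → ‖u t‖ ≤ M}

/-- The optimal distance `r(M,τ)` of the optimal target problem `(OP)^{M,τ}`. -/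
def rOP (U : ℝ → H →L[ℂ] H) (B : H →L[ℂ] H) (y₀ z_d : H) (T M τ : ℝ) : ℝ :=
  sInf ((fun u : ℝ → H => ‖stateT U B T τ u y₀ - z_d‖) '' UadmSet M τ T)

/-- `u` is an optimal control to `(OP)^{M,τ}`. -/
def IsOptOP (U : ℝ → H →L[ℂ] H) (B : H →L[ℂ] H) (y₀ z_d : H) (T M τ : ℝ) (u : ℝ → H) :
    Prop :=
  u ∈ UadmSet M τ T ∧ ‖stateT U B T τ u y₀ - z_d‖ = rOP U B y₀ z_d T M τ

/-- `M^τ`, the minimal norm for exact steering to the target `z_d`. -/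
def Mtau (U : ℝ → H →L[ℂ] H) (B : H →L[ℂ] H) (y₀ z_d : H) (T τ : ℝ) : ℝ :=
  sInf ((fun u : ℝ → H => supNorm u τ T) ''
    {u : ℝ → H | MemLinfty u 0 T ∧ stateT U B T τ u y₀ = z_d})

/-- The admissible set `W_{τ,r}` of the optimal norm problem `(NP)^{τ,r}`. -/
def WadmSet (U : ℝ → H →L[ℂ] H) (B : H →L[ℂ] H) (y₀ z_d : H) (T τ r : ℝ) :
    Set (ℝ → H) :=
  {u | MemLinfty u 0 T ∧ ‖stateT U B T τ u y₀ - z_d‖ ≤ r}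

/-- The optimal norm `M(τ,r)` of `(NP)^{τ,r}`. -/
def MNP (U : ℝ → H →L[ℂ] H) (B : H →L[ℂ] H) (y₀ z_d : H) (T τ r : ℝ) : ℝ :=
  sInf ((fun u : ℝ → H => supNorm u τ T) '' WadmSet U B y₀ z_d T τ r)

/-- `u` is an optimal control to `(NP)^{τ,r}`. -/
def IsOptNP (U : ℝ → H →L[ℂ] H) (B : H →L[ℂ] H) (y₀ z_d : H) (T τ r : ℝ) (u : ℝ → H) :
    Prop :=
  u ∈ WadmSet U B y₀ z_d T τ r ∧ supNorm u τ T = MNP U B y₀ z_d T τ r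

/-- The admissible set `V_{M,r}` of the second type optimal time problem `(TP)^{M,r}`. -/
def VadmSet (U : ℝ → H →L[ℂ] H) (B : H →L[ℂ] H) (y₀ z_d : H) (T M r : ℝ) :
    Set (ℝ → H) :=
  {u | ∃ τ : ℝ, τ ∈ Ico (0 : ℝ) T ∧ u ∈ UadmSet M τ T ∧
    ‖stateT U B T τ u y₀ - z_d‖ ≤ r}

/-- `τ_{M,r}(u)`. -/
def tauOf (U : ℝ → H →L[ℂ] H) (B : H →L[ℂ] H) (y₀ z_d : H) (T r : ℝ) (u : ℝ → H) : ℝ :=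
  sSup {τ : ℝ | τ ∈ Ico (0 : ℝ) T ∧ ‖stateT U B T τ u y₀ - z_d‖ ≤ r}

/-- The optimal time `τ(M,r)` of `(TP)^{M,r}`. -/
def tauTP (U : ℝ → H →L[ℂ] H) (B : H →L[ℂ] H) (y₀ z_d : H) (T M r : ℝ) : ℝ :=
  sSup (tauOf U B y₀ z_d T r '' VadmSet U B y₀ z_d T M r)

/-- `u` is an optimal control to `(TP)^{M,r}`. -/
def IsOptTP (U : ℝ → H →L[ℂ] H) (B : H →L[ℂ] H) (y₀ z_d : H) (T M r : ℝ) (u : ℝ → H) :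
    Prop :=
  u ∈ VadmSet U B y₀ z_d T M r ∧
    ‖stateT U B T (tauTP U B y₀ z_d T M r) u y₀ - z_d‖ ≤ r

/-- The adjoint state `φ*(t) = U(t-T)(z_d - y(T; χ_{(τ,T)}u, y₀))`. -/
def adjState (U : ℝ → H →L[ℂ] H) (B : H →L[ℂ] H) (y₀ z_d : H) (T τ : ℝ) (u : ℝ → H)
    (t : ℝ) : H :=
  U (t - T) (z_d - stateT U B T τ u y₀)

section Helpers

variable {U : ℝ → H →L[ℂ] H} {B : H →L[ℂ] H}

lemma U_zero_apply (hU : IsUnitaryGroup U) (x : H) : U 0 x = x := by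
  rw [hU.1]; rfl

lemma U_norm_apply (hU : IsUnitaryGroup U) (t : ℝ) (x : H) : ‖U t x‖ = ‖x‖ := hU.2.2.1 t x

lemma U_add_apply (hU : IsUnitaryGroup U) (a b : ℝ) (x : H) : U (a + b) x = U a (U b x) := by
  rw [hU.2.1]; rfl

lemma U_comp_apply (hU : IsUnitaryGroup U) (a b : ℝ) (x : H) : U a (U b x) = U (a + b) x :=
  (U_add_apply hU a b x).symm

lemma U_cancel (hU : IsUnitaryGroup U) (a : ℝ) (x : H) : U a (U (-a) x) = x := by
  rw [U_comp_apply hU, add_neg_cancel, U_zero_apply hU]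

lemma U_eq_zero_iff (hU : IsUnitaryGroup U) (t : ℝ) (x : H) : U t x = 0 ↔ x = 0 := by
  constructor
  · intro h
    have h2 := U_norm_apply hU t x
    rw [h, norm_zero] at h2
    exact norm_eq_zero.mp h2.symm
  · rintro rfl; exact map_zero _

lemma U_continuous2 (hU : IsUnitaryGroup U) : Continuous fun p : ℝ × H => U p.1 p.2 := by
  rw [continuous_iff_continuousAt]
  rintro ⟨t₀, x₀⟩
  have hbound : ∀ p : ℝ × H, ‖U p.1 p.2 - U t₀ x₀‖ ≤ ‖p.2 - x₀‖ + ‖U p.1 x₀ - U t₀ x₀‖ := by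
    rintro ⟨t, x⟩
    have h1 : U t x - U t₀ x₀ = U t (x - x₀) + (U t x₀ - U t₀ x₀) := by
      rw [map_sub]; abel
    rw [h1]
    refine (norm_add_le _ _).trans ?_
    rw [U_norm_apply hU]
  have hg : Continuous fun p : ℝ × H => ‖p.2 - x₀‖ + ‖U p.1 x₀ - U t₀ x₀‖ :=
    ((continuous_snd.sub continuous_const).norm).add
      (((hU.2.2.2 x₀).comp continuous_fst).sub continuous_const).norm
  have hg0 : Tendsto (fun p : ℝ × H => ‖p.2 - x₀‖ + ‖U p.1 x₀ - U t₀ x₀‖)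
      (𝓝 (t₀, x₀)) (𝓝 0) := by
    have h2 := hg.tendsto (t₀, x₀)
    simpa using h2
  have hsq := squeeze_zero (fun p => norm_nonneg _) hbound hg0
  rw [ContinuousAt, tendsto_iff_norm_sub_tendsto_zero]
  exact hsq

lemma normB_le (hB : IsOrthProj B) (x : H) : ‖B x‖ ≤ ‖x‖ := by
  rcases eq_or_lt_of_le (norm_nonneg (B x)) with h0 | h0
  · rw [← h0]; exact norm_nonneg x
  have hBB : B (B x) = B x := by
    have h := congrArg (fun L : H →L[ℂ] H => L x) hB.2.1
    simpa using h
  have h1 : (inner ℂ (B x) (B x) : ℂ) = inner ℂ x (B x) := by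
    rw [hB.2.2 x (B x), hBB]
  have h2 : ‖B x‖ * ‖B x‖ = RCLike.re (inner ℂ x (B x) : ℂ) :=
    (inner_self_eq_norm_mul_norm (𝕜 := ℂ) (B x)).symm.trans (congrArg RCLike.re h1)
  have h3 : RCLike.re (inner ℂ x (B x) : ℂ) ≤ ‖x‖ * ‖B x‖ :=
    (RCLike.re_le_norm _).trans (norm_inner_le_norm x (B x))
  exact le_of_mul_le_mul_right (h2.le.trans h3) h0

lemma kernel_aesm (hU : IsUnitaryGroup U) (B : H →L[ℂ] H) {u : ℝ → H}
    (hu : AEStronglyMeasurable u (volume : Measure ℝ)) (T : ℝ) :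
    AEStronglyMeasurable (fun s => U (T - s) (B (u s))) (volume : Measure ℝ) := by
  have h1 : AEStronglyMeasurable (fun s : ℝ => ((T - s : ℝ), B (u s))) (volume : Measure ℝ) :=
    ((continuous_const.sub continuous_id).aestronglyMeasurable).prodMk
      (B.continuous.comp_aestronglyMeasurable hu)
  exact (U_continuous2 hU).comp_aestronglyMeasurable h1

lemma kernel_integrableOn (hU : IsUnitaryGroup U) (hB : IsOrthProj B) {u : ℝ → H}
    (hu : AEStronglyMeasurable u (volume : Measure ℝ)) {a b c : ℝ}
    (hc : ∀ᵐ t : ℝ ∂volume, t ∈ Ioo a b → ‖u t‖ ≤ c) (T : ℝ) :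
    IntegrableOn (fun s => U (T - s) (B (u s))) (Ioo a b) volume := by
  refine Integrable.mono' (g := fun _ => c)
    (integrableOn_const measure_Ioo_lt_top.ne) ((kernel_aesm hU B hu T).restrict) ?_
  rw [ae_restrict_iff' measurableSet_Ioo]
  refine hc.mono fun t ht hmem => ?_
  rw [U_norm_apply hU]
  exact (normB_le hB _).trans (ht hmem)

lemma kernel_norm_integral_le (hU : IsUnitaryGroup U) (hB : IsOrthProj B) {u : ℝ → H}
    (hu : AEStronglyMeasurable u (volume : Measure ℝ)) {a b c : ℝ} (hab : a ≤ b)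
    (hc : ∀ᵐ t : ℝ ∂volume, t ∈ Ioo a b → ‖u t‖ ≤ c) (T : ℝ) :
    ‖∫ s in Ioo a b, U (T - s) (B (u s))‖ ≤ c * (b - a) := by
  have h1 : ‖∫ s in Ioo a b, U (T - s) (B (u s))‖ ≤ ∫ _ in Ioo a b, c := by
    refine norm_integral_le_of_norm_le (integrableOn_const measure_Ioo_lt_top.ne) ?_
    rw [ae_restrict_iff' measurableSet_Ioo]
    refine hc.mono fun t ht hmem => ?_
    rw [U_norm_apply hU]
    exact (normB_le hB _).trans (ht hmem)
  refine h1.trans ?_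
  rw [setIntegral_const, smul_eq_mul, Real.volume_real_Ioo_of_le hab]
  rw [mul_comm]

lemma integral_Ioo_split {f : ℝ → H} {a b c : ℝ} (hab : a ≤ b) (hbc : b ≤ c)
    (hf : IntegrableOn f (Ioo a c) volume) :
    ∫ s in Ioo a c, f s = (∫ s in Ioo a b, f s) + ∫ s in Ioo b c, f s := by
  have hIoc : IntegrableOn f (Ioc a c) volume := by
    rwa [integrableOn_Ioc_iff_integrableOn_Ioo]
  rw [← integral_Ioc_eq_integral_Ioo, ← integral_Ioc_eq_integral_Ioo (x := a) (y := b),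
    ← integral_Ioc_eq_integral_Ioo (x := b) (y := c), ← Ioc_union_Ioc_eq_Ioc hab hbc]
  exact setIntegral_union (Ioc_disjoint_Ioc_of_le le_rfl) measurableSet_Ioc
    (hIoc.mono_set (Ioc_subset_Ioc_right hbc)) (hIoc.mono_set (Ioc_subset_Ioc_left hab))

lemma integral_kernel_pull (hU : IsUnitaryGroup U) (hB : IsOrthProj B) {u : ℝ → H}
    (hu : AEStronglyMeasurable u (volume : Measure ℝ)) {a b c : ℝ}
    (hc : ∀ᵐ t : ℝ ∂volume, t ∈ Ioo a b → ‖u t‖ ≤ c) (T T' : ℝ) :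
    ∫ s in Ioo a b, U (T - s) (B (u s))
      = U (T - T') (∫ s in Ioo a b, U (T' - s) (B (u s))) := by
  rw [← ContinuousLinearMap.integral_comp_comm _ (kernel_integrableOn hU hB hu hc T')]
  refine setIntegral_congr_fun measurableSet_Ioo fun s _ => ?_
  show U (T - s) (B (u s)) = U (T - T') (U (T' - s) (B (u s)))
  rw [U_comp_apply hU]
  congr 1
  ring

lemma stateT_nonpos (hU : IsUnitaryGroup U) {T : ℝ} (hT : T ≤ 0) (u : ℝ → H) (y₀ : H) :
    stateT U B T 0 u y₀ = U T y₀ := by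
  unfold stateT
  rw [Ioo_eq_empty (not_lt.2 hT)]
  simp

lemma pos_of_state_eq_zero (hU : IsUnitaryGroup U) {T : ℝ} {u : ℝ → H} {y₀ : H}
    (hy₀ : y₀ ≠ 0) (h : stateT U B T 0 u y₀ = 0) : 0 < T := by
  by_contra hT
  rw [stateT_nonpos hU (not_lt.1 hT)] at h
  exact hy₀ ((U_eq_zero_iff hU T y₀).1 h)

lemma stateT_split (hU : IsUnitaryGroup U) (hB : IsOrthProj B) {u : ℝ → H}
    (hu : AEStronglyMeasurable u (volume : Measure ℝ)) {a b c c₀ : ℝ}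
    (hbound : ∀ᵐ t : ℝ ∂volume, t ∈ Ioo a c → ‖u t‖ ≤ c₀) (hab : a ≤ b) (hbc : b ≤ c)
    (y₀ : H) :
    stateT U B c a u y₀
      = U (c - b) (stateT U B b a u y₀) + ∫ s in Ioo b c, U (c - s) (B (u s)) := by
  unfold stateT
  rw [integral_Ioo_split hab hbc (kernel_integrableOn hU hB hu hbound c), map_add,
    U_comp_apply hU, sub_add_cancel,
    ← integral_kernel_pull hU hB hu
      (hbound.mono fun t ht hm => ht (Ioo_subset_Ioo_right hbc hm)) c b,
    add_assoc]

lemma supNorm_nonneg (u : ℝ → H) (a b : ℝ) : 0 ≤ supNorm u a b :=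
  Real.sInf_nonneg fun _ hx => hx.1

lemma supNorm_le {u : ℝ → H} {a b c : ℝ} (hc : 0 ≤ c)
    (h : ∀ᵐ t : ℝ ∂volume, t ∈ Ioo a b → ‖u t‖ ≤ c) : supNorm u a b ≤ c :=
  csInf_le ⟨0, fun _ hx => hx.1⟩ ⟨hc, h⟩

lemma ae_le_supNorm {u : ℝ → H} {a b : ℝ} (h : MemLinfty u a b) :
    ∀ᵐ t : ℝ ∂volume, t ∈ Ioo a b → ‖u t‖ ≤ supNorm u a b := by
  obtain ⟨hm, c, hc⟩ := h
  have hne : {c : ℝ | 0 ≤ c ∧ ∀ᵐ t : ℝ ∂volume, t ∈ Ioo a b → ‖u t‖ ≤ c}.Nonempty :=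
    ⟨max c 0, le_max_right _ _, hc.mono fun t ht hmem => (ht hmem).trans (le_max_left _ _)⟩
  have key : ∀ n : ℕ, ∀ᵐ t : ℝ ∂volume, t ∈ Ioo a b → ‖u t‖ ≤ supNorm u a b + 1 / (n + 1) := by
    intro n
    obtain ⟨x, hxS, hxlt⟩ := Real.lt_sInf_add_pos hne (show (0:ℝ) < 1 / (n + 1) by positivity)
    exact hxS.2.mono fun t ht hmem => (ht hmem).trans hxlt.le
  refine (ae_all_iff.2 key).mono fun t ht hmem => ?_
  by_contra hlt
  push_neg at hlt
  obtain ⟨n, hn⟩ := exists_nat_one_div_lt (show (0:ℝ) < ‖u t‖ - supNorm u a b by linarith)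
  have h2 := ht n hmem
  linarith

lemma ae_exists_mem {s : Set ℝ} (hs : volume s ≠ 0) {p : ℝ → Prop}
    (h : ∀ᵐ t : ℝ ∂volume, p t) : ∃ t ∈ s, p t := by
  by_contra hc
  push_neg at hc
  have h0 : volume {t : ℝ | ¬ p t} = 0 := ae_iff.1 h
  exact hs (measure_mono_null (fun t ht => hc t ht) h0)

lemma integral_Ioo_shift (g : ℝ → H) (a b t : ℝ) :
    ∫ s in Ioo a b, g (s - t) = ∫ s in Ioo (a - t) (b - t), g s := by
  rw [← integral_indicator measurableSet_Ioo, ← integral_indicator measurableSet_Ioo,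
    ← integral_sub_right_eq_self (fun s => (Ioo (a - t) (b - t)).indicator g s) t]
  congr 1
  funext s
  simp only [indicator_apply, mem_Ioo, sub_lt_sub_iff_right]

lemma kernel_indicator (U : ℝ → H →L[ℂ] H) (B : H →L[ℂ] H) (u : ℝ → H) (S : Set ℝ) (T : ℝ) :
    (fun s => U (T - s) (B (S.indicator u s)))
      = S.indicator (fun s => U (T - s) (B (u s))) := by
  funext s
  by_cases hs : s ∈ S
  · rw [indicator_of_mem hs, indicator_of_mem hs]
  · rw [indicator_of_notMem hs, indicator_of_notMem hs, map_zero, map_zero]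

end Helpers
section LemP

variable {U : ℝ → H →L[ℂ] H} {B : H →L[ℂ] H}

lemma exists_earlier (hU : IsUnitaryGroup U) (hB : IsOrthProj B) (hEC : EC U B)
    (y₀ : H) {S M' M : ℝ} (hS : 0 < S) (hM'0 : 0 ≤ M') (hM' : M' < M)
    {v : ℝ → H} (hvm : AEStronglyMeasurable v (volume : Measure ℝ))
    (hvb : ∀ᵐ t : ℝ ∂volume, t ∈ Ioo 0 S → ‖v t‖ ≤ M')
    (hv0 : stateT U B S 0 v y₀ = 0) :
    ∃ s : ℝ, 0 < s ∧ s < S ∧ ∃ u ∈ UMset U B y₀ M, stateT U B s 0 u y₀ = 0 := by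
  obtain ⟨C, hC, hECu⟩ := hEC (S / 2) (by positivity)
  set τ₀ := S / 2 with hτ₀
  set δ := min (S / 2) ((M - M') / (C * (M' + 1))) with hδdef
  have hδpos : 0 < δ := lt_min (by positivity) (div_pos (by linarith) (by positivity))
  have hδle : δ ≤ S / 2 := min_le_left _ _
  have hδ2 : C * (M' + 1) * δ ≤ M - M' := by
    have h1 := min_le_right (S / 2) ((M - M') / (C * (M' + 1)))
    have h2 : (0:ℝ) < C * (M' + 1) := by positivity
    calc C * (M' + 1) * δ ≤ C * (M' + 1) * ((M - M') / (C * (M' + 1))) := by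
          exact mul_le_mul_of_nonneg_left h1 h2.le
      _ = M - M' := by field_simp
  have hSδ : τ₀ ≤ S - δ := by
    rw [hτ₀]; linarith
  have hSδpos : 0 < S - δ := by linarith [hS, hδle]
  set zδ := stateT U B (S - δ) 0 v y₀ with hzδ
  have hsplit := stateT_split hU hB hvm hvb (le_of_lt hSδpos) (by linarith : S - δ ≤ S) y₀
  rw [hv0] at hsplit
  have hz_eq : U (S - (S - δ)) zδ = - ∫ s in Ioo (S - δ) S, U (S - s) (B (v s)) := by
    rw [hzδ]
    exact eq_neg_of_add_eq_zero_left hsplit.symm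
  have hzbound : ‖zδ‖ ≤ M' * δ := by
    have h1 : ‖U (S - (S - δ)) zδ‖ = ‖zδ‖ := U_norm_apply hU _ _
    rw [hz_eq, norm_neg] at h1
    have h2 : ∀ᵐ t : ℝ ∂volume, t ∈ Ioo (S - δ) S → ‖v t‖ ≤ M' :=
      hvb.mono fun t ht hm => ht ⟨lt_of_le_of_lt hSδpos.le hm.1, hm.2⟩
    have h3 := kernel_norm_integral_le hU hB hvm (by linarith : S - δ ≤ S) h2 S
    calc ‖zδ‖ = ‖∫ s in Ioo (S - δ) S, U (S - s) (B (v s))‖ := h1.symm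
      _ ≤ M' * (S - (S - δ)) := h3
      _ = M' * δ := by ring_nf
  obtain ⟨c, hcm, hcb, hcs⟩ := hECu 0 (U (-(S - δ - τ₀)) (-zδ))
  have hcb' : ∀ᵐ t : ℝ ∂volume, t ∈ Ioo 0 τ₀ → ‖c t‖ ≤ M - M' := by
    refine hcb.mono fun t ht hm => (ht hm).trans ?_
    rw [map_zero, sub_zero, U_norm_apply hU, norm_neg]
    calc C * ‖zδ‖ ≤ C * (M' * δ) := mul_le_mul_of_nonneg_left hzbound hC.le
      _ ≤ C * (M' + 1) * δ := by nlinarith [hC.le, hδpos.le]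
      _ ≤ M - M' := hδ2
  set w := (Ioo (0:ℝ) (S - δ)).indicator (fun s => v s + (Ioo (0:ℝ) τ₀).indicator c s) with hw
  have hwm : AEStronglyMeasurable w (volume : Measure ℝ) :=
    (hvm.add (hcm.indicator measurableSet_Ioo)).indicator measurableSet_Ioo
  have hbd : ∀ᵐ t : ℝ ∂volume, t ∈ Ioi (0:ℝ) → ‖w t‖ ≤ M := by
    filter_upwards [hvb, hcb'] with t h1 h2 _
    by_cases ht : t ∈ Ioo (0:ℝ) (S - δ)
    · rw [hw, indicator_of_mem ht]
      have hv1 : ‖v t‖ ≤ M' := h1 ⟨ht.1, by linarith [ht.2]⟩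
      have hc1 : ‖(Ioo (0:ℝ) τ₀).indicator c t‖ ≤ M - M' := by
        by_cases ht' : t ∈ Ioo (0:ℝ) τ₀
        · rw [indicator_of_mem ht']; exact h2 ht'
        · rw [indicator_of_notMem ht', norm_zero]; linarith
      calc ‖v t + (Ioo (0:ℝ) τ₀).indicator c t‖
          ≤ ‖v t‖ + ‖(Ioo (0:ℝ) τ₀).indicator c t‖ := norm_add_le _ _
        _ ≤ M := by linarith
    · rw [hw, indicator_of_notMem ht, norm_zero]; linarith
  have hvb' : ∀ᵐ t : ℝ ∂volume, t ∈ Ioo 0 (S - δ) → ‖v t‖ ≤ M' :=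
    hvb.mono fun t ht hm => ht ⟨hm.1, by linarith [hm.2]⟩
  have hcb'' : ∀ᵐ t : ℝ ∂volume, t ∈ Ioo 0 (S - δ) →
      ‖(Ioo (0:ℝ) τ₀).indicator c t‖ ≤ M - M' := by
    refine hcb'.mono fun t ht _ => ?_
    by_cases ht' : t ∈ Ioo (0:ℝ) τ₀
    · rw [indicator_of_mem ht']; exact ht ht'
    · rw [indicator_of_notMem ht', norm_zero]; linarith
  have hstate : stateT U B (S - δ) 0 w y₀ = 0 := by
    have hz2 : zδ = U (S - δ) y₀ + ∫ s in Ioo (0:ℝ) (S - δ), U ((S - δ) - s) (B (v s)) := by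
      rw [hzδ]; rfl
    unfold stateT
    have heq : EqOn (fun s => U ((S - δ) - s) (B (w s)))
        (fun s => U ((S - δ) - s) (B (v s))
          + U ((S - δ) - s) (B ((Ioo (0:ℝ) τ₀).indicator c s))) (Ioo (0:ℝ) (S - δ)) := by
      intro s hs
      simp only [hw, indicator_of_mem hs, map_add]
    rw [setIntegral_congr_fun measurableSet_Ioo heq]
    rw [integral_add (kernel_integrableOn hU hB hvm hvb' (S - δ))
      (kernel_integrableOn hU hB (hcm.indicator measurableSet_Ioo) hcb'' (S - δ))]
    rw [kernel_indicator U B c (Ioo (0:ℝ) τ₀) (S - δ),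
      setIntegral_indicator measurableSet_Ioo,
      inter_eq_self_of_subset_right (Ioo_subset_Ioo_right hSδ),
      integral_kernel_pull hU hB hcm hcb' (S - δ) τ₀]
    have hcs' : ∫ s in Ioo (0:ℝ) τ₀, U (τ₀ - s) (B (c s)) = U (-(S - δ - τ₀)) (-zδ) := by
      have h := hcs
      unfold stateT at h
      rwa [map_zero, zero_add] at h
    rw [hcs', U_cancel hU, ← add_assoc, ← hz2, add_neg_cancel]
  refine ⟨S - δ, hSδpos, by linarith, w, ⟨⟨hwm, M, hbd⟩, hbd, ⟨S - δ, hSδpos, hstate⟩⟩, hstate⟩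

end LemP
theorem tocp_nocp_equivalence
    (U : ℝ → H →L[ℂ] H) (B : H →L[ℂ] H) (hU : IsUnitaryGroup U) (hB : IsOrthProj B)
    (hEC : EC U B) (hECrev : EC (fun t => U (-t)) B)
    (hBB : BB U B) (hBBrev : BB (fun t => U (-t)) B)
    (hET : ET U B) (hETrev : ET (fun t => U (-t)) B)
    (y₀ : H) (hy₀ : y₀ ≠ 0) (M T : ℝ) (hM : 0 < M) (hT : 0 < T) :
    (∀ u : ℝ → H, u ∈ UMset U B y₀ M → stateT U B (Tmin U B y₀ M) 0 u y₀ = 0 →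
      (Ioo (0 : ℝ) (Tmin U B y₀ M)).indicator u ∈ VTset U B y₀ (Tmin U B y₀ M) ∧
      supNorm ((Ioo (0 : ℝ) (Tmin U B y₀ M)).indicator u) 0 (Tmin U B y₀ M) =
        Mmin U B y₀ (Tmin U B y₀ M)) ∧
    (∀ v : ℝ → H, v ∈ VTset U B y₀ T → supNorm v 0 T = Mmin U B y₀ T →
      (Ioo (0 : ℝ) T).indicator v ∈ UMset U B y₀ (Mmin U B y₀ T) ∧
      stateT U B (Tmin U B y₀ (Mmin U B y₀ T)) 0 ((Ioo (0 : ℝ) T).indicator v) y₀ = 0) := by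
  constructor
  · -- Part 1
    intro u huU hustate
    set T₁ := Tmin U B y₀ M with hT₁
    have hT₁pos : 0 < T₁ := pos_of_state_eq_zero hU hy₀ hustate
    obtain ⟨⟨hum, c₀, hbc₀⟩, hub, s₀, hs₀⟩ := huU
    have hub' : ∀ᵐ t : ℝ ∂volume, t ∈ Ioo 0 T₁ → ‖u t‖ ≤ M :=
      hub.mono fun t ht hm => ht hm.1
    have hind_state : stateT U B T₁ 0 ((Ioo (0:ℝ) T₁).indicator u) y₀
        = stateT U B T₁ 0 u y₀ := by
      unfold stateT
      congr 1
      refine setIntegral_congr_fun measurableSet_Ioo fun s hs => ?_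
      simp only [indicator_of_mem hs]
    have hmem : (Ioo (0:ℝ) T₁).indicator u ∈ VTset U B y₀ T₁ := by
      refine ⟨⟨hum.indicator measurableSet_Ioo, M, ?_⟩, by rw [hind_state]; exact hustate⟩
      exact hub'.mono fun t ht hm => by rw [indicator_of_mem hm]; exact ht hm
    refine ⟨hmem, ?_⟩
    have hbb := hBB y₀ hy₀ M hM u ⟨⟨hum, c₀, hbc₀⟩, hub, s₀, hs₀⟩ hustate
    have hioo_ne : volume (Ioo (0:ℝ) T₁) ≠ 0 := by
      rw [Real.volume_Ioo]
      simp only [ne_eq, ENNReal.ofReal_eq_zero, not_le]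
      linarith
    have hsup_eq : supNorm ((Ioo (0:ℝ) T₁).indicator u) 0 T₁ = M := by
      refine le_antisymm (supNorm_le hM.le (hbb.mono fun t ht hm => by
        rw [indicator_of_mem hm, ht hm])) ?_
      unfold supNorm
      refine le_csInf ⟨M, hM.le, hbb.mono fun t ht hm => by
        rw [indicator_of_mem hm, ht hm]⟩ ?_
      rintro b ⟨hb0, hbae⟩
      obtain ⟨t, htmem, h1, h2⟩ := ae_exists_mem hioo_ne (hbb.and hbae)
      have h3 := h2 htmem
      rw [indicator_of_mem htmem] at h3
      rw [← h1 htmem]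
      exact h3
    have hbddMm : BddBelow ((fun v : ℝ → H => supNorm v 0 T₁) '' VTset U B y₀ T₁) := by
      refine ⟨0, ?_⟩
      rintro x ⟨v', _, rfl⟩
      exact supNorm_nonneg _ _ _
    have hMmin_le : Mmin U B y₀ T₁ ≤ M := by
      unfold Mmin
      calc sInf ((fun v : ℝ → H => supNorm v 0 T₁) '' VTset U B y₀ T₁)
          ≤ supNorm ((Ioo (0:ℝ) T₁).indicator u) 0 T₁ := csInf_le hbddMm ⟨_, hmem, rfl⟩
        _ = M := hsup_eq
    have hMmin_ge : M ≤ Mmin U B y₀ T₁ := by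
      unfold Mmin
      refine le_csInf ⟨_, ⟨_, hmem, rfl⟩⟩ ?_
      rintro b ⟨v', hv', rfl⟩
      by_contra hb
      push_neg at hb
      obtain ⟨s, hs_pos, hs_lt, u', hu'U, hu's⟩ := exists_earlier hU hB hEC y₀ hT₁pos
        (supNorm_nonneg v' 0 T₁) hb hv'.1.1 (ae_le_supNorm hv'.1) hv'.2
      have hle : Tmin U B y₀ M ≤ s := by
        unfold Tmin
        exact csInf_le ⟨0, fun x hx => hx.1.le⟩ ⟨hs_pos, u', hu'U, hu's⟩
      rw [← hT₁] at hle
      linarith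
    rw [hsup_eq]
    exact (le_antisymm hMmin_le hMmin_ge).symm
  · -- Part 2
    intro v hvV hvsup
    set M₁ := Mmin U B y₀ T with hM₁
    have hy₀pos : 0 < ‖y₀‖ := norm_pos_iff.2 hy₀
    have hstate_norm : ∀ v' ∈ VTset U B y₀ T, ‖y₀‖ ≤ supNorm v' 0 T * T := by
      intro v' hv'
      have h2 : U T y₀ = - ∫ s in Ioo (0:ℝ) T, U (T - s) (B (v' s)) :=
        eq_neg_of_add_eq_zero_left hv'.2
      have h3 := kernel_norm_integral_le hU hB hv'.1.1 hT.le (ae_le_supNorm hv'.1) T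
      calc ‖y₀‖ = ‖U T y₀‖ := (U_norm_apply hU T y₀).symm
        _ = ‖∫ s in Ioo (0:ℝ) T, U (T - s) (B (v' s))‖ := by rw [h2, norm_neg]
        _ ≤ supNorm v' 0 T * (T - 0) := h3
        _ = supNorm v' 0 T * T := by ring_nf
    have hM₁pos : 0 < M₁ := by
      have hge : ‖y₀‖ / T ≤ M₁ := by
        rw [hM₁]
        unfold Mmin
        refine le_csInf ⟨_, ⟨v, hvV, rfl⟩⟩ ?_
        rintro b ⟨v', hv', rfl⟩
        rw [div_le_iff₀ hT]
        exact hstate_norm v' hv'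
      calc (0:ℝ) < ‖y₀‖ / T := by positivity
        _ ≤ M₁ := hge
    have hvb : ∀ᵐ t : ℝ ∂volume, t ∈ Ioo 0 T → ‖v t‖ ≤ M₁ := by
      have h := ae_le_supNorm hvV.1
      rw [hvsup] at h
      exact h
    have hind_state : stateT U B T 0 ((Ioo (0:ℝ) T).indicator v) y₀ = 0 := by
      have heq : stateT U B T 0 ((Ioo (0:ℝ) T).indicator v) y₀ = stateT U B T 0 v y₀ := by
        unfold stateT
        congr 1
        refine setIntegral_congr_fun measurableSet_Ioo fun s hs => ?_
        simp only [indicator_of_mem hs]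
      rw [heq]
      exact hvV.2
    have hmemU : (Ioo (0:ℝ) T).indicator v ∈ UMset U B y₀ M₁ := by
      have hbnd : ∀ᵐ t : ℝ ∂volume, t ∈ Ioi (0:ℝ) → ‖(Ioo (0:ℝ) T).indicator v t‖ ≤ M₁ := by
        refine hvb.mono fun t ht _ => ?_
        by_cases h' : t ∈ Ioo (0:ℝ) T
        · rw [indicator_of_mem h']; exact ht h'
        · rw [indicator_of_notMem h', norm_zero]; exact hM₁pos.le
      exact ⟨⟨(hvV.1.1).indicator measurableSet_Ioo, M₁, hbnd⟩, hbnd, T, hT, hind_state⟩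
    refine ⟨hmemU, ?_⟩
    set T₂ := Tmin U B y₀ M₁ with hT₂
    have hT₂le : T₂ ≤ T := by
      rw [hT₂]
      unfold Tmin
      exact csInf_le ⟨0, fun x hx => hx.1.le⟩ ⟨hT, _, hmemU, hind_state⟩
    have hT₂eq : T₂ = T := by
      by_contra hne
      have hT₂lt : T₂ < T := lt_of_le_of_ne hT₂le hne
      obtain ⟨u', hu'U, hu'state⟩ := hET y₀ hy₀ M₁ hM₁pos
      rw [← hT₂] at hu'state
      have hT₂pos : 0 < T₂ := pos_of_state_eq_zero hU hy₀ hu'state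
      obtain ⟨C, hC, hECu⟩ := hEC (T - T₂) (by linarith)
      set τ := T - T₂ with hτ
      set ε := min (1/2 : ℝ) (M₁ / (2 * C * ‖y₀‖ + 1)) with hε
      have hεpos : 0 < ε := lt_min (by norm_num) (by positivity)
      have hεle : ε ≤ 1/2 := min_le_left _ _
      set l := 1 - ε with hl
      have hl0 : 0 ≤ l := by rw [hl]; linarith
      have hl1 : l < 1 := by rw [hl]; linarith
      have h1l : (1 : ℝ) - l = ε := by rw [hl]; ring
      have hCε : C * (ε * ‖y₀‖) < M₁ := by
        have h1 : ε ≤ M₁ / (2 * C * ‖y₀‖ + 1) := min_le_right _ _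
        have h4 : (0:ℝ) < 2 * C * ‖y₀‖ + 1 := by positivity
        have h2 : C * (ε * ‖y₀‖) ≤ C * ‖y₀‖ * (M₁ / (2 * C * ‖y₀‖ + 1)) := by
          rw [mul_comm (C * ‖y₀‖)]
          rw [show C * (ε * ‖y₀‖) = ε * (C * ‖y₀‖) by ring]
          exact mul_le_mul_of_nonneg_right h1 (by positivity)
        have h3 : C * ‖y₀‖ * (M₁ / (2 * C * ‖y₀‖ + 1)) < M₁ := by
          rw [mul_div_assoc', div_lt_iff₀ h4]
          nlinarith [hM₁pos, hC.le, hy₀pos.le]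
        linarith
      obtain ⟨c, hcm, hcb, hcs⟩ := hECu 0 ((-(((1:ℝ) - l : ℝ) : ℂ)) • U T y₀)
      have hζnorm : ‖(-(((1:ℝ) - l : ℝ) : ℂ)) • U T y₀‖ = ε * ‖y₀‖ := by
        rw [norm_smul, U_norm_apply hU, norm_neg, Complex.norm_real, Real.norm_eq_abs, h1l,
          abs_of_nonneg hεpos.le]
      have hcb' : ∀ᵐ t : ℝ ∂volume, t ∈ Ioo 0 τ → ‖c t‖ ≤ C * (ε * ‖y₀‖) := by
        refine hcb.mono fun t ht hm => (ht hm).trans ?_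
        rw [map_zero, sub_zero, hζnorm]
      obtain ⟨⟨hu'm, c₁, hu'c₁⟩, hu'b, _⟩ := hu'U
      have hcm2 : AEStronglyMeasurable (fun s : ℝ => c (s - T₂)) (volume : Measure ℝ) :=
        hcm.comp_quasiMeasurePreserving
          (measurePreserving_sub_right volume T₂).quasiMeasurePreserving
      set f₁ := (Ioo (0:ℝ) T₂).indicator (fun s => ((l : ℝ) : ℂ) • u' s) with hf₁
      set f₂ := (Ioo T₂ T).indicator (fun s => c (s - T₂)) with hf₂
      set w := fun s => f₁ s + f₂ s with hwdef
      have hf₁m : AEStronglyMeasurable f₁ (volume : Measure ℝ) :=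
        (hu'm.const_smul _).indicator measurableSet_Ioo
      have hf₂m : AEStronglyMeasurable f₂ (volume : Measure ℝ) :=
        hcm2.indicator measurableSet_Ioo
      have hwm : AEStronglyMeasurable w (volume : Measure ℝ) := hf₁m.add hf₂m
      have hcb2 : ∀ᵐ t : ℝ ∂volume, t ∈ Ioo T₂ T → ‖c (t - T₂)‖ ≤ C * (ε * ‖y₀‖) := by
        have h :=
          (measurePreserving_sub_right volume T₂).quasiMeasurePreserving.ae hcb'
        refine h.mono fun t ht hm => ht ⟨sub_pos.2 hm.1, ?_⟩
        rw [hτ]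
        exact sub_lt_sub_right hm.2 T₂
      set θ := max (l * M₁) (C * (ε * ‖y₀‖)) with hθ
      have hθ0 : 0 ≤ θ := le_max_of_le_left (by positivity)
      have hθlt : θ < M₁ := max_lt (by nlinarith) hCε
      have hf₁b : ∀ᵐ t : ℝ ∂volume, t ∈ Ioo 0 T → ‖f₁ t‖ ≤ l * M₁ := by
        refine hu'b.mono fun t ht _ => ?_
        by_cases h' : t ∈ Ioo (0:ℝ) T₂
        · rw [hf₁, indicator_of_mem h', norm_smul, Complex.norm_real, Real.norm_eq_abs,
            abs_of_nonneg hl0]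
          exact mul_le_mul_of_nonneg_left (ht h'.1) hl0
        · rw [hf₁, indicator_of_notMem h', norm_zero]
          positivity
      have hf₂b : ∀ᵐ t : ℝ ∂volume, t ∈ Ioo 0 T → ‖f₂ t‖ ≤ C * (ε * ‖y₀‖) := by
        refine hcb2.mono fun t ht _ => ?_
        by_cases h' : t ∈ Ioo T₂ T
        · rw [hf₂, indicator_of_mem h']; exact ht h'
        · rw [hf₂, indicator_of_notMem h', norm_zero]; positivity
      have hwb : ∀ᵐ t : ℝ ∂volume, t ∈ Ioo 0 T → ‖w t‖ ≤ θ := by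
        filter_upwards [hf₁b, hf₂b] with t h1 h2 hm
        by_cases ht1 : t ∈ Ioo (0:ℝ) T₂
        · have hzero : f₂ t = 0 := by
            rw [hf₂]
            exact indicator_of_notMem (fun hx => absurd hx.1 (not_lt.2 ht1.2.le)) _
          rw [hwdef]
          simp only [hzero, add_zero]
          exact (h1 hm).trans (le_max_left _ _)
        · have hzero : f₁ t = 0 := by
            rw [hf₁]
            exact indicator_of_notMem ht1 _
          rw [hwdef]
          simp only [hzero, zero_add]
          exact (h2 hm).trans (le_max_right _ _)
      have hu'bT₂ : ∀ᵐ t : ℝ ∂volume, t ∈ Ioo 0 T₂ → ‖u' t‖ ≤ M₁ :=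
        hu'b.mono fun t ht hm => ht hm.1
      have hstateW : stateT U B T 0 w y₀ = 0 := by
        unfold stateT
        have hsplit : EqOn (fun s => U (T - s) (B (w s)))
            (fun s => U (T - s) (B (f₁ s)) + U (T - s) (B (f₂ s))) (Ioo (0:ℝ) T) := by
          intro s _
          simp only [hwdef, map_add]
        rw [setIntegral_congr_fun measurableSet_Ioo hsplit,
          integral_add (kernel_integrableOn hU hB hf₁m hf₁b T)
            (kernel_integrableOn hU hB hf₂m hf₂b T)]
        have hinner : ∫ s in Ioo (0:ℝ) T₂, U (T₂ - s) (B (u' s)) = - (U T₂ y₀) := by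
          have h := hu'state
          unfold stateT at h
          exact eq_neg_of_add_eq_zero_right h
        have hI₁ : ∫ s in Ioo (0:ℝ) T, U (T - s) (B (f₁ s))
            = -(((l : ℝ) : ℂ) • U T y₀) := by
          rw [hf₁, kernel_indicator U B _ (Ioo (0:ℝ) T₂) T,
            setIntegral_indicator measurableSet_Ioo,
            inter_eq_self_of_subset_right (Ioo_subset_Ioo_right hT₂le)]
          have hsm : EqOn (fun s => U (T - s) (B (((l : ℝ) : ℂ) • u' s)))
              (fun s => ((l : ℝ) : ℂ) • U (T - s) (B (u' s))) (Ioo (0:ℝ) T₂) := by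
            intro s _
            simp only [_root_.map_smul]
          rw [setIntegral_congr_fun measurableSet_Ioo hsm, integral_smul,
            integral_kernel_pull hU hB hu'm hu'bT₂ T T₂, hinner, map_neg, U_comp_apply hU,
            sub_add_cancel, smul_neg]
        have hI₂ : ∫ s in Ioo (0:ℝ) T, U (T - s) (B (f₂ s))
            = (-(((1:ℝ) - l : ℝ) : ℂ)) • U T y₀ := by
          rw [hf₂, kernel_indicator U B _ (Ioo T₂ T) T,
            setIntegral_indicator measurableSet_Ioo,
            inter_eq_self_of_subset_right (Ioo_subset_Ioo hT₂pos.le le_rfl)]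
          have hcomp : EqOn (fun s => U (T - s) (B (c (s - T₂))))
              (fun s => (fun r => U (τ - r) (B (c r))) (s - T₂)) (Ioo T₂ T) := by
            intro s _
            simp only
            congr 2
            rw [hτ]; ring
          rw [setIntegral_congr_fun measurableSet_Ioo hcomp,
            integral_Ioo_shift (fun r => U (τ - r) (B (c r))) T₂ T T₂, sub_self]
          have h := hcs
          unfold stateT at h
          rw [map_zero, zero_add] at h
          rw [← hτ]
          exact h
        rw [hI₁, hI₂]
        have hsum : (((l : ℝ) : ℂ)) • U T y₀ + ((((1:ℝ) - l : ℝ) : ℂ)) • U T y₀ = U T y₀ := by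
          rw [← add_smul, ← Complex.ofReal_add, show l + (1 - l) = 1 by ring,
            Complex.ofReal_one, one_smul]
        rw [neg_smul, ← neg_add, hsum, add_neg_cancel]
      have hwV : w ∈ VTset U B y₀ T := ⟨⟨hwm, θ, hwb⟩, hstateW⟩
      have hMle : M₁ ≤ supNorm w 0 T := by
        have h1 : Mmin U B y₀ T ≤ supNorm w 0 T := by
          unfold Mmin
          refine csInf_le ⟨0, ?_⟩ ⟨w, hwV, rfl⟩
          rintro x ⟨v', _, rfl⟩
          exact supNorm_nonneg _ _ _
        rw [← hM₁] at h1
        exact h1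
      have h2 : supNorm w 0 T ≤ θ := supNorm_le hθ0 hwb
      linarith
    rw [hT₂eq]
    exact hind_state
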